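/- For natural numbers k, s, t with t > 0: setting b_k P_t^s := C(k - 2^s(2^t-1), 2^s) mod 2 times b_{k-2^s(2^t-1)}, the coefficient is zero (i.e., C(k - 2^s(2^t-1), 2^s) is even or k < 2^s(2^t-1)) if and only if either k < 2^{s+t}, or k ≥ 2^{s+t} and the s-th binary digit of k is 1. -/

import Mathlib

private lemma choose_pow_two_mod_two (s a : ℕ) :
    Nat.choose a (2^s) % 2 = (a / 2^s) % 2 := by
  induction s generalizing a with
  | zero => simp [Nat.choose_one_right]
  | succ s ih =>
    haveI : Fact (Nat.Prime 2) := ⟨Nat.prime_two⟩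
    have h := Choose.choose_modEq_choose_mod_mul_choose_div_nat (n := a) (k := 2^(s+1)) (p := 2)
    have h2 : 2^(s+1) % 2 = 0 := by simp [pow_succ, Nat.mul_mod_left]
    have h3 : 2^(s+1) / 2 = 2^s := by rw [pow_succ, Nat.mul_div_cancel]; norm_num
    rw [h2, h3, Nat.choose_zero_right, one_mul] at h
    rw [Nat.ModEq] at h
    rw [h, ih (a / 2), Nat.div_div_eq_div_mul, ← pow_succ']

/-- the coefficient of b_k P_t^s is zero (i.e. k < 2^s(2^t-1) or the
binomial coefficient is even) iff either k < 2^{s+t}, or k ≥ 2^{s+t} and the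
s-th binary digit of k is 1. -/
theorem stmt1 (k s t : ℕ) (ht : 0 < t) :
    (k < 2^s * (2^t - 1) ∨ Even (Nat.choose (k - 2^s * (2^t - 1)) (2^s))) ↔
      (k < 2^(s+t) ∨ (2^(s+t) ≤ k ∧ k.testBit s = true)) := by
  have hsp : (0:ℕ) < 2^s := Nat.pow_pos (n := s) (by norm_num)
  have hts : (2:ℕ)^(s+t) = 2^s * (2^t - 1) + 2^s := by
    have h1 : (2:ℕ)^s ≤ 2^s * 2^t :=
      Nat.le_mul_of_pos_right _ (Nat.pow_pos (n := t) (by norm_num))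
    rw [Nat.mul_sub, mul_one, pow_add]
    omega
  have heven : Even (Nat.choose (k - 2^s * (2^t - 1)) (2^s)) ↔
      ((k - 2^s * (2^t - 1)) / 2^s) % 2 = 0 := by
    rw [Nat.even_iff, choose_pow_two_mod_two s _]
  have htb : k.testBit s = decide (k / 2^s % 2 = 1) := Nat.testBit_eq_decide_div_mod_eq ..
  rcases lt_or_ge k (2^(s+t)) with hk | hk
  · simp only [hk, true_or, iff_true]
    rcases lt_or_ge k (2^s * (2^t - 1)) with h | h
    · exact Or.inl h
    · refine Or.inr ?_
      rw [Nat.choose_eq_zero_of_lt (by omega)]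
      exact Even.zero
  · have hmk : 2^s * (2^t - 1) ≤ k := by omega
    have hdiv : k / 2^s = (k - 2^s * (2^t - 1)) / 2^s + (2^t - 1) := by
      have hkeq : k = (k - 2^s * (2^t - 1)) + 2^s * (2^t - 1) := by omega
      conv_lhs => rw [hkeq]
      rw [Nat.add_mul_div_left _ _ (Nat.pow_pos (n := s) (by norm_num))]
    have htodd : (2^t - 1) % 2 = 1 := by
      have h2 : 2^t % 2 = 0 := Nat.even_iff.mp ((Nat.even_pow).mpr ⟨even_two, ht.ne'⟩)
      have h1 : (2:ℕ) ≤ 2^t := by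
        calc (2:ℕ) = 2^1 := (pow_one 2).symm
        _ ≤ 2^t := Nat.pow_le_pow_right (by norm_num) ht
      omega
    rw [or_iff_right (not_lt.mpr hmk), heven, htb]
    simp only [decide_eq_true_eq]
    omega
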